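/- arXiv:1508.04106 — 2 statements merged into one kernel-verified Lean document; each statement's English description precedes it below -/
import Mathlib

section
/- Let x₀ ∈ ℝ² and let r : ℝ → ℝ be continuous and 2π-periodic. Then the set {x ∈ ℝ² : |x − x₀| = r(h(x − x₀))} has two-dimensional Lebesgue measure zero. -/
open MeasureTheory

/-- The angular polar coordinate of a point in the plane (the argument of the
corresponding complex number, taking values in `(-π, π]`). -/
noncomputable def polarAngle (x : EuclideanSpace ℝ (Fin 2)) : ℝ :=
  Complex.arg ⟨x 0, x 1⟩

/-- The graph `{p | p.1 = r p.2}` of a measurable function is a null set in `ℝ × ℝ`. -/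
lemma graph_null (r : ℝ → ℝ) (hr : Measurable r) :
    volume {p : ℝ × ℝ | p.1 = r p.2} = 0 := by
  have hs : MeasurableSet {p : ℝ × ℝ | p.1 = r p.2} :=
    measurableSet_eq_fun measurable_fst (hr.comp measurable_snd)
  rw [show (volume : Measure (ℝ × ℝ)) = (volume : Measure ℝ).prod volume from rfl,
    Measure.prod_apply_symm hs]
  have h0 : ∀ y : ℝ, volume ((fun x => (x, y)) ⁻¹' {p : ℝ × ℝ | p.1 = r p.2}) = 0 := by
    intro y
    have : ((fun x => (x, y)) ⁻¹' {p : ℝ × ℝ | p.1 = r p.2}) = {r y} := by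
      ext x; simp [Set.mem_preimage]
    rw [this]
    exact measure_singleton _
  simp only [h0, lintegral_zero]

/-- The polar curve `{p | |p| = r (arg p)}` is a null set in `ℝ × ℝ`. -/
lemma polar_curve_null (r : ℝ → ℝ) (hr : Continuous r) :
    volume {p : ℝ × ℝ | Real.sqrt (p.1 ^ 2 + p.2 ^ 2)
      = r (Complex.arg (Complex.equivRealProd.symm p))} = 0 := by
  set T : Set (ℝ × ℝ) := {p : ℝ × ℝ | Real.sqrt (p.1 ^ 2 + p.2 ^ 2)
      = r (Complex.arg (Complex.equivRealProd.symm p))} with hT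
  set N : Set (ℝ × ℝ) := {q : ℝ × ℝ | q.1 = r q.2} with hN
  have hNnull : volume N = 0 := graph_null r hr.measurable
  -- the image of the null set N under the smooth map `polarCoord.symm` is null
  have himg : volume (polarCoord.symm '' N) = 0 := by
    apply addHaar_image_eq_zero_of_differentiableOn_of_addHaar_eq_zero volume
      (f := polarCoord.symm) _ hNnull
    intro p _
    exact (hasFDerivAt_polarCoord_symm p).differentiableAt.differentiableWithinAt
  -- the complement of the source of polarCoord is null
  have hsrc : volume (polarCoord.sourceᶜ) = 0 := by
    have := polarCoord_source_ae_eq_univ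
    rwa [Filter.eventuallyEq_univ, mem_ae_iff] at this
  -- T is contained in the union
  have hsub : T ⊆ (polarCoord.symm '' N) ∪ polarCoord.sourceᶜ := by
    intro p hp
    by_cases hps : p ∈ polarCoord.source
    · exact Or.inl ⟨polarCoord p, hp, polarCoord.left_inv hps⟩
    · exact Or.inr hps
  refine le_antisymm ?_ zero_le
  calc volume T ≤ volume ((polarCoord.symm '' N) ∪ polarCoord.sourceᶜ) := measure_mono hsub
    _ ≤ volume (polarCoord.symm '' N) + volume (polarCoord.sourceᶜ) := measure_union_le _ _
    _ = 0 := by rw [himg, hsrc, add_zero]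

theorem stmt2 (x₀ : EuclideanSpace ℝ (Fin 2))
    (r : ℝ → ℝ) (hr : Continuous r) (hrper : Function.Periodic r (2 * Real.pi)) :
    volume {x : EuclideanSpace ℝ (Fin 2) | ‖x - x₀‖ = r (polarAngle (x - x₀))} = 0 := by
  set e : EuclideanSpace ℝ (Fin 2) ≃ᵐ ℝ × ℝ :=
    (MeasurableEquiv.toLp 2 (Fin 2 → ℝ)).symm.trans MeasurableEquiv.finTwoArrow with he_def
  have he : MeasurePreserving e volume volume :=
    (volume_preserving_finTwoArrow ℝ).comp
      (EuclideanSpace.volume_preserving_symm_measurableEquiv_toLp (Fin 2))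
  set p₀ : ℝ × ℝ := (x₀ 0, x₀ 1) with hp₀
  set T₀ : Set (ℝ × ℝ) := {p : ℝ × ℝ | Real.sqrt (p.1 ^ 2 + p.2 ^ 2)
      = r (Complex.arg (Complex.equivRealProd.symm p))} with hT₀def
  have hmeq : Measurable (fun p : ℝ × ℝ => Complex.equivRealProd.symm p) :=
    Complex.measurableEquivRealProd.symm.measurable
  have hT₀ : MeasurableSet T₀ :=
    measurableSet_eq_fun
      (((continuous_fst.pow 2).add (continuous_snd.pow 2)).sqrt.measurable)
      ((hr.measurable.comp Complex.measurable_arg).comp hmeq)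
  have key : {x : EuclideanSpace ℝ (Fin 2) | ‖x - x₀‖ = r (polarAngle (x - x₀))}
      = e ⁻¹' ((· - p₀) ⁻¹' T₀) := by
    ext x
    have hex : e x = (x 0, x 1) := rfl
    have h1 : ‖x - x₀‖ = Real.sqrt ((x 0 - x₀ 0) ^ 2 + (x 1 - x₀ 1) ^ 2) := by
      rw [EuclideanSpace.norm_eq]
      congr 1
      rw [Fin.sum_univ_two]
      simp [PiLp.sub_apply, sq_abs]
    have h2 : polarAngle (x - x₀) = Complex.arg ⟨x 0 - x₀ 0, x 1 - x₀ 1⟩ := by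
      simp [polarAngle, PiLp.sub_apply]
    simp only [Set.mem_setOf_eq, Set.mem_preimage, hex, hT₀def, h1, h2]
    rfl
  rw [key, he.measure_preimage (((measurableSet_preimage (measurable_sub_const p₀)
      hT₀)).nullMeasurableSet),
    (measurePreserving_sub_right volume p₀).measure_preimage hT₀.nullMeasurableSet,
    polar_curve_null r hr]
end

section
/- Let D ⊆ ℝ² be a bounded open set, let u₊, u₋ > 0, let r : ℝ → ℝ be 2π-periodic and Lipschitz continuous, let x₀ ∈ D, let (r_k)_{k≥1} be a sequence of continuous 2π-periodic functions on ℝ with ‖r_k − r‖_∞ → 0, and let (x₀^k)_{k≥1} ⊆ D be a sequence of points with |x₀^k − x₀| → 0 as k → ∞. Then F₂(r_k, x₀^k) converges to F₂(r, x₀) in Lebesgue measure on D, i.e. for every δ > 0 the Lebesgue measure of {x ∈ D : |F₂(r_k, x₀^k)(x) − F₂(r, x₀)(x)| > δ} tends to 0 as k → ∞. -/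
open MeasureTheory Filter

/-- The star-shaped inclusion `A(r, x₀) = {x ∈ D : |x − x₀| ≤ r(h(x − x₀))}`. -/
def starSet (D : Set (EuclideanSpace ℝ (Fin 2))) (r : ℝ → ℝ)
    (x₀ : EuclideanSpace ℝ (Fin 2)) : Set (EuclideanSpace ℝ (Fin 2)) :=
  {x | x ∈ D ∧ ‖x - x₀‖ ≤ r (polarAngle (x - x₀))}

/-- The star-shaped conductivity `F₂(r, x₀) = (u₊ − u₋)·𝟙_{A(r,x₀)} + u₋`. -/
noncomputable def starF (D : Set (EuclideanSpace ℝ (Fin 2))) (uplus uminus : ℝ)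
    (r : ℝ → ℝ) (x₀ : EuclideanSpace ℝ (Fin 2)) (x : EuclideanSpace ℝ (Fin 2)) : ℝ :=
  (uplus - uminus) * (starSet D r x₀).indicator (fun _ => (1 : ℝ)) x + uminus

open Set
open scoped NNReal ENNReal

/-- The identification of `EuclideanSpace ℝ (Fin 2)` with `ℂ`. -/
noncomputable def starAuxEmb (x : EuclideanSpace ℝ (Fin 2)) : ℂ := ⟨x 0, x 1⟩

lemma starAux_continuous_emb : Continuous starAuxEmb := by
  have : starAuxEmb = fun x => (x 0 : ℂ) + (x 1 : ℂ) * Complex.I := by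
    funext x; rw [starAuxEmb, Complex.mk_eq_add_mul_I]
  rw [this]
  fun_prop

lemma starAux_norm_eq_abs (x : EuclideanSpace ℝ (Fin 2)) :
    ‖x‖ = ‖starAuxEmb x‖ := by
  rw [EuclideanSpace.norm_eq, Fin.sum_univ_two, Complex.norm_def, Complex.normSq_apply]
  simp [starAuxEmb, sq, Real.norm_eq_abs, abs_mul_abs_self]

lemma starAux_emb_ne_zero {x : EuclideanSpace ℝ (Fin 2)} (hx : x ≠ 0) : starAuxEmb x ≠ 0 := by
  intro h
  apply hx
  have h0 := congrArg Complex.re h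
  have h1 := congrArg Complex.im h
  simp [starAuxEmb] at h0 h1
  ext i
  fin_cases i <;> simpa

lemma starAux_continuous_periodic_lift {r : ℝ → ℝ} (hc : Continuous r)
    (hp : Function.Periodic r (2 * Real.pi)) : Continuous hp.lift :=
  hc.quotient_liftOn' _

lemma starAux_continuousAt_r_polarAngle {r : ℝ → ℝ} (hc : Continuous r)
    (hp : Function.Periodic r (2 * Real.pi)) {x : EuclideanSpace ℝ (Fin 2)} (hx : x ≠ 0) :
    ContinuousAt (fun y => r (polarAngle y)) x := by
  have key : (fun y => r (polarAngle y)) =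
      (hp.lift ∘ ((↑) ∘ Complex.arg : ℂ → Real.Angle)) ∘ starAuxEmb := by
    funext y
    exact (hp.lift_coe _).symm
  rw [key]
  exact (((starAux_continuous_periodic_lift hc hp).continuousAt).comp
    (Complex.continuousAt_arg_coe_angle (starAux_emb_ne_zero hx))).comp
    starAux_continuous_emb.continuousAt

lemma starAux_measurable_polarAngle : Measurable polarAngle :=
  Complex.measurable_arg.comp starAux_continuous_emb.measurable

noncomputable def starAuxPsi (p : ℝ × ℝ) : EuclideanSpace ℝ (Fin 2) :=
  (WithLp.equiv 2 (Fin 2 → ℝ)).symm ![p.1 * Real.cos p.2, p.1 * Real.sin p.2]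

lemma starAux_contDiff_psi : ContDiff ℝ 1 starAuxPsi := by
  have h2 : ContDiff ℝ 1
      (fun p : ℝ × ℝ => (![p.1 * Real.cos p.2, p.1 * Real.sin p.2] : Fin 2 → ℝ)) := by
    rw [contDiff_pi]
    intro i
    fin_cases i
    · simpa using contDiff_fst.mul (Real.contDiff_cos.comp contDiff_snd)
    · simpa using contDiff_fst.mul (Real.contDiff_sin.comp contDiff_snd)
  exact (PiLp.continuousLinearEquiv 2 ℝ (fun _ : Fin 2 => ℝ)).symm.contDiff.comp h2

/-- The polar "graph" `{y : ‖y‖ = r (polarAngle y)}` of a Lipschitz function is Lebesgue-null. -/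
lemma starAux_graph_null {K : NNReal} {r : ℝ → ℝ} (hrlip : LipschitzWith K r) :
    volume {y : EuclideanSpace ℝ (Fin 2) | ‖y‖ = r (polarAngle y)} = 0 := by
  set S := {y : EuclideanSpace ℝ (Fin 2) | ‖y‖ = r (polarAngle y)}
  have hsub : S ⊆ starAuxPsi '' (Set.range fun θ : ℝ => (r θ, θ)) := by
    rintro y hy
    refine ⟨(r (polarAngle y), polarAngle y), ⟨polarAngle y, rfl⟩, ?_⟩
    have habs : ‖starAuxEmb y‖ = r (Complex.arg (starAuxEmb y)) := by
      rw [← starAux_norm_eq_abs]; exact hy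
    ext i
    fin_cases i
    · show (starAuxPsi _) 0 = y 0
      simp only [starAuxPsi, WithLp.equiv_symm_apply, PiLp.toLp_apply]
      show r (polarAngle y) * Real.cos (polarAngle y) = y 0
      have := Complex.norm_mul_cos_arg (starAuxEmb y)
      rw [habs] at this
      simpa [polarAngle, starAuxEmb] using this
    · show (starAuxPsi _) 1 = y 1
      simp only [starAuxPsi, WithLp.equiv_symm_apply, PiLp.toLp_apply]
      show r (polarAngle y) * Real.sin (polarAngle y) = y 1
      have := Complex.norm_mul_sin_arg (starAuxEmb y)
      rw [habs] at this
      simpa [polarAngle, starAuxEmb] using this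
  have hdim : dimH S ≤ 1 := by
    refine (dimH_mono hsub).trans ?_
    refine (starAux_contDiff_psi.contDiffOn.dimH_image_le convex_univ (subset_univ _)).trans ?_
    have hg : LipschitzWith (max K 1) fun θ : ℝ => (r θ, θ) := hrlip.prodMk LipschitzWith.id
    calc dimH (Set.range fun θ : ℝ => (r θ, θ)) ≤ dimH (univ : Set ℝ) := hg.dimH_range_le
    _ = 1 := Real.dimH_univ
  set e := (MeasurableEquiv.toLp 2 (Fin 2 → ℝ)).symm
  have helip : LipschitzWith 1 (⇑e) :=
    PiLp.lipschitzWith_ofLp 2 (fun _ : Fin 2 => ℝ)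
  have himg : volume (e '' S) = 0 := by
    have hlt : dimH (e '' S) < (2 : ℝ≥0) := by
      refine lt_of_le_of_lt ((helip.dimH_image_le S).trans hdim) ?_
      norm_num
    have h0 : (μH[(2:ℝ≥0)] : Measure (Fin 2 → ℝ)) (e '' S) = 0 :=
      hausdorffMeasure_of_dimH_lt hlt
    have hvol : (μH[((2:ℝ≥0):ℝ)] : Measure (Fin 2 → ℝ)) = volume := by
      have h := MeasureTheory.hausdorffMeasure_pi_real (ι := Fin 2)
      norm_num at h ⊢
      exact h
    rwa [hvol] at h0
  refine measure_mono_null (subset_preimage_image e S) ?_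
  rw [(EuclideanSpace.volume_preserving_symm_measurableEquiv_toLp (Fin 2)).measure_preimage_emb
    (MeasurableEquiv.measurableEmbedding e)]
  exact himg

lemma starAux_graph_null' {K : NNReal} {r : ℝ → ℝ} (hrlip : LipschitzWith K r)
    (x₀ : EuclideanSpace ℝ (Fin 2)) :
    volume {x : EuclideanSpace ℝ (Fin 2) | ‖x - x₀‖ = r (polarAngle (x - x₀))} = 0 := by
  have : {x : EuclideanSpace ℝ (Fin 2) | ‖x - x₀‖ = r (polarAngle (x - x₀))} =
      (fun x => x + (-x₀)) ⁻¹' {y : EuclideanSpace ℝ (Fin 2) | ‖y‖ = r (polarAngle y)} := by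
    ext x; simp [sub_eq_add_neg]
  rw [this, measure_preimage_add_right]
  exact starAux_graph_null hrlip

lemma starAux_measurable_starF (D : Set (EuclideanSpace ℝ (Fin 2))) (hDm : MeasurableSet D)
    (uplus uminus : ℝ) {ρ : ℝ → ℝ} (hρ : Continuous ρ) (c : EuclideanSpace ℝ (Fin 2)) :
    Measurable (starF D uplus uminus ρ c) := by
  have hset : MeasurableSet (starSet D ρ c) := by
    have h1 : Measurable fun x : EuclideanSpace ℝ (Fin 2) => ‖x - c‖ :=
      (continuous_id.sub continuous_const).norm.measurable
    have h2 : Measurable fun x : EuclideanSpace ℝ (Fin 2) => ρ (polarAngle (x - c)) :=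
      hρ.measurable.comp (starAux_measurable_polarAngle.comp
        ((continuous_id.sub continuous_const).measurable))
    exact hDm.inter (measurableSet_le h1 h2)
  exact (measurable_const.mul (measurable_const.indicator hset)).add measurable_const

theorem stmt6 (D : Set (EuclideanSpace ℝ (Fin 2))) (hDopen : IsOpen D)
    (hDbdd : Bornology.IsBounded D)
    (uplus uminus : ℝ) (huplus : 0 < uplus) (huminus : 0 < uminus)
    (r : ℝ → ℝ) (hrper : Function.Periodic r (2 * Real.pi))
    (K : NNReal) (hrlip : LipschitzWith K r)
    (x₀ : EuclideanSpace ℝ (Fin 2)) (hx₀ : x₀ ∈ D)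
    (rk : ℕ → ℝ → ℝ) (hrk : ∀ k, Continuous (rk k))
    (hrkper : ∀ k, Function.Periodic (rk k) (2 * Real.pi))
    (hrconv : TendstoUniformly rk r atTop)
    (x₀k : ℕ → EuclideanSpace ℝ (Fin 2)) (hx₀k : ∀ k, x₀k k ∈ D)
    (hxconv : Tendsto x₀k atTop (nhds x₀)) :
    ∀ δ > (0 : ℝ),
      Tendsto
        (fun k => volume {x | x ∈ D ∧
          δ < |starF D uplus uminus (rk k) (x₀k k) x - starF D uplus uminus r x₀ x|})
        atTop (nhds 0) := by
  intro δ hδ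
  have hDm : MeasurableSet D := hDopen.measurableSet
  set F := starF D uplus uminus r x₀ with hF
  set Fk := fun k => starF D uplus uminus (rk k) (x₀k k) with hFk
  -- the finite measure restricted to D
  haveI : IsFiniteMeasure (volume.restrict D) := by
    constructor
    rw [Measure.restrict_apply_univ]
    exact hDbdd.measure_lt_top
  -- the exceptional null set
  set N : Set (EuclideanSpace ℝ (Fin 2)) :=
    {x | ‖x - x₀‖ = r (polarAngle (x - x₀))} ∪ {x₀} with hN
  have hNnull : volume N = 0 :=
    measure_union_null (starAux_graph_null' hrlip x₀) (measure_singleton x₀)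
  -- pointwise convergence off N
  have hptwise : ∀ x ∉ N, Tendsto (fun k => Fk k x) atTop (nhds (F x)) := by
    intro x hxN
    have hxne : x - x₀ ≠ 0 := by
      intro h
      exact hxN (Or.inr (by simpa [sub_eq_zero] using h))
    have hgne : ‖x - x₀‖ ≠ r (polarAngle (x - x₀)) := fun h => hxN (Or.inl h)
    -- suffices: eventually Fk k x = F x
    have hev : ∀ᶠ k in atTop, Fk k x = F x := by
      by_cases hxD : x ∈ D
      · -- the moving "radial gap" converges to the fixed one
        have hyk : Tendsto (fun k => x - x₀k k) atTop (nhds (x - x₀)) :=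
          tendsto_const_nhds.sub hxconv
        have hnorm : Tendsto (fun k => ‖x - x₀k k‖) atTop (nhds ‖x - x₀‖) := hyk.norm
        have hrcont : Tendsto (fun k => r (polarAngle (x - x₀k k))) atTop
            (nhds (r (polarAngle (x - x₀)))) :=
          ((starAux_continuousAt_r_polarAngle hrlip.continuous hrper hxne).tendsto).comp hyk
        have hdiff : Tendsto
            (fun k => rk k (polarAngle (x - x₀k k)) - r (polarAngle (x - x₀k k)))
            atTop (nhds 0) := by
          rw [NormedAddCommGroup.tendsto_nhds_zero]
          intro ε hε
          filter_upwards [Metric.tendstoUniformly_iff.mp hrconv ε hε] with k hk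
          have := hk (polarAngle (x - x₀k k))
          rw [Real.dist_eq, abs_sub_comm] at this
          simpa [Real.norm_eq_abs] using this
        have hrk' : Tendsto (fun k => rk k (polarAngle (x - x₀k k))) atTop
            (nhds (r (polarAngle (x - x₀)))) := by
          have := hdiff.add hrcont
          simpa using this
        have htend : Tendsto (fun k => ‖x - x₀k k‖ - rk k (polarAngle (x - x₀k k)))
            atTop (nhds (‖x - x₀‖ - r (polarAngle (x - x₀)))) := hnorm.sub hrk'
        rcases lt_or_gt_of_ne hgne with hlt | hgt
        · -- x lies strictly inside: eventually in both star sets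
          have hevk : ∀ᶠ k in atTop,
              ‖x - x₀k k‖ - rk k (polarAngle (x - x₀k k)) < 0 :=
            htend.eventually_lt_const (by linarith)
          filter_upwards [hevk] with k hk
          have hxin : x ∈ starSet D (rk k) (x₀k k) := ⟨hxD, by linarith⟩
          have hxin' : x ∈ starSet D r x₀ := ⟨hxD, le_of_lt hlt⟩
          rw [hFk, hF]
          simp only [starF, Set.indicator_of_mem hxin, Set.indicator_of_mem hxin']
        · -- x lies strictly outside: eventually in neither star set
          have hevk : ∀ᶠ k in atTop,
              0 < ‖x - x₀k k‖ - rk k (polarAngle (x - x₀k k)) :=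
            htend.eventually_const_lt (by linarith)
          filter_upwards [hevk] with k hk
          have hxout : x ∉ starSet D (rk k) (x₀k k) := fun hmem => by
            have := hmem.2; linarith
          have hxout' : x ∉ starSet D r x₀ := fun hmem => by
            have := hmem.2; linarith
          rw [hFk, hF]
          simp only [starF, Set.indicator_of_notMem hxout, Set.indicator_of_notMem hxout']
      · -- x ∉ D : both indicators vanish, always
        refine Filter.Eventually.of_forall fun k => ?_
        have hxout : x ∉ starSet D (rk k) (x₀k k) := fun hmem => hxD hmem.1
        have hxout' : x ∉ starSet D r x₀ := fun hmem => hxD hmem.1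
        rw [hFk, hF]
        simp only [starF, Set.indicator_of_notMem hxout, Set.indicator_of_notMem hxout']
    exact Tendsto.congr' (hev.mono fun k hk => hk.symm) tendsto_const_nhds
  -- convergence in measure
  have hTIM : TendstoInMeasure (volume.restrict D) Fk atTop F := by
    refine tendstoInMeasure_of_tendsto_ae (fun k => ?_) ?_
    · exact (starAux_measurable_starF D hDm uplus uminus (hrk k) (x₀k k)).aestronglyMeasurable
    · have hN0 : (volume.restrict D) N = 0 :=
        le_antisymm ((Measure.restrict_apply_le ..).trans hNnull.le) (by simp)
      have hae : ∀ᵐ x ∂(volume.restrict D), x ∉ N := by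
        rw [ae_iff]
        simpa using hN0
      exact hae.mono fun x hx => hptwise x hx
  have h := hTIM (ENNReal.ofReal δ) (by positivity)
  refine tendsto_of_tendsto_of_tendsto_of_le_of_le tendsto_const_nhds h
    (fun k => by simp) ?_
  intro k
  calc volume {x | x ∈ D ∧ δ < |Fk k x - F x|}
      ≤ volume ({x | ENNReal.ofReal δ ≤ edist (Fk k x) (F x)} ∩ D) := by
        refine measure_mono fun x hx => ⟨?_, hx.1⟩
        have := hx.2
        rw [Set.mem_setOf_eq, edist_dist, Real.dist_eq]
        exact ENNReal.ofReal_le_ofReal this.le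
    _ = volume.restrict D {x | ENNReal.ofReal δ ≤ edist (Fk k x) (F x)} := (Measure.restrict_apply' hDm).symm
end
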